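/- Every m-point-antipodal space of cardinality at least m is antipodal, and being A_m implies being A_n for n ≥ m: if (X,d) is a finite metric space in which every subset of cardinality m is an antipodal space (every point of the subset has a point of the subset at distance equal to the subset's diameter), then every subset of cardinality n ≥ m is also antipodal; in particular if |X| ≥ m then X itself is antipodal. -/

import Mathlib

def IsMetric {X : Type*} (d : X → X → ℝ) : Prop :=
  (∀ x y, 0 ≤ d x y) ∧ (∀ x y, d x y = d y x) ∧ (∀ x, d x x = 0) ∧
    (∀ x y z, d x z ≤ d x y + d y z)

/-- Diameter of a finite subset. -/
noncomputable def diamS {X : Type*} (d : X → X → ℝ) (S : Finset X) : ℝ :=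
  sSup {r : ℝ | ∃ a ∈ S, ∃ b ∈ S, r = d a b}

/-- `S` is antipodal: every point of `S` has a point of `S` at distance
equal to the diameter of `S`. -/
def AntipodalOn {X : Type*} (d : X → X → ℝ) (S : Finset X) : Prop :=
  ∀ a ∈ S, ∃ b ∈ S, d a b = diamS d S

lemma diam_set_eq {X : Type*} [DecidableEq X] (d : X → X → ℝ) (S : Finset X) :
    {r : ℝ | ∃ a ∈ S, ∃ b ∈ S, r = d a b} =
      ↑((S ×ˢ S).image fun p => d p.1 p.2) := by
  ext r
  simp only [Set.mem_setOf_eq, Finset.coe_image, Set.mem_image, Finset.mem_coe,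
    Finset.mem_product, Prod.exists]
  constructor
  · rintro ⟨a, ha, b, hb, rfl⟩; exact ⟨a, b, ⟨ha, hb⟩, rfl⟩
  · rintro ⟨a, b, ⟨ha, hb⟩, rfl⟩; exact ⟨a, ha, b, hb, rfl⟩

lemma diam_set_finite {X : Type*} [DecidableEq X] (d : X → X → ℝ) (S : Finset X) :
    {r : ℝ | ∃ a ∈ S, ∃ b ∈ S, r = d a b}.Finite := by
  rw [diam_set_eq]; exact Finset.finite_toSet _

lemma diamS_mem {X : Type*} [DecidableEq X] (d : X → X → ℝ) (S : Finset X)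
    (hS : S.Nonempty) : ∃ a ∈ S, ∃ b ∈ S, diamS d S = d a b := by
  obtain ⟨x, hx⟩ := hS
  have hne : {r : ℝ | ∃ a ∈ S, ∃ b ∈ S, r = d a b}.Nonempty :=
    ⟨d x x, x, hx, x, hx, rfl⟩
  exact hne.csSup_mem (diam_set_finite d S)

lemma le_diamS {X : Type*} [DecidableEq X] (d : X → X → ℝ) {S : Finset X}
    {a b : X} (ha : a ∈ S) (hb : b ∈ S) : d a b ≤ diamS d S :=
  le_csSup (diam_set_finite d S).bddAbove ⟨a, ha, b, hb, rfl⟩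

lemma diamS_mono {X : Type*} [DecidableEq X] (d : X → X → ℝ) {T S : Finset X}
    (hTS : T ⊆ S) (hT : T.Nonempty) : diamS d T ≤ diamS d S := by
  obtain ⟨x, hx⟩ := hT
  refine csSup_le ⟨d x x, x, hx, x, hx, rfl⟩ ?_
  rintro r ⟨a, ha, b, hb, rfl⟩
  exact le_diamS d (hTS ha) (hTS hb)

theorem Am_implies_An {X : Type*} [Fintype X] [DecidableEq X]
    (d : X → X → ℝ) (hd : IsMetric d) (m : ℕ) (hm : 3 ≤ m)
    (hAm : ∀ S : Finset X, S.card = m → AntipodalOn d S) :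
    (∀ n, m ≤ n → ∀ S : Finset X, S.card = n → AntipodalOn d S) ∧
      (m ≤ Fintype.card X → AntipodalOn d Finset.univ) := by
  have main : ∀ S : Finset X, m ≤ S.card → AntipodalOn d S := by
    intro S hcard a ha
    have hSne : S.Nonempty := ⟨a, ha⟩
    obtain ⟨x, hx, y, hy, hxy⟩ := diamS_mem d S hSne
    have hsub : ({a, x, y} : Finset X) ⊆ S := by
      intro z hz
      simp only [Finset.mem_insert, Finset.mem_singleton] at hz
      rcases hz with rfl | rfl | rfl <;> assumption
    have hcard3 : ({a, x, y} : Finset X).card ≤ m :=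
      le_trans (le_trans (Finset.card_insert_le _ _)
        (by have h := Finset.card_insert_le x {y}; simp only [Finset.card_singleton] at h; omega)) hm
    obtain ⟨T, hT1, hT2, hT3⟩ :=
      Finset.exists_subsuperset_card_eq hsub hcard3 hcard
    have haT : a ∈ T := hT1 (by simp)
    have hxT : x ∈ T := hT1 (by simp)
    have hyT : y ∈ T := hT1 (by simp)
    have hdiam : diamS d T = diamS d S := by
      refine le_antisymm (diamS_mono d hT2 ⟨a, haT⟩) ?_
      rw [hxy]; exact le_diamS d hxT hyT
    obtain ⟨b, hbT, hb⟩ := hAm T hT3 a haT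
    exact ⟨b, hT2 hbT, by rw [hb, hdiam]⟩
  refine ⟨fun n hn S hS => main S (hS ▸ hn), fun h => main _ (by simpa using h)⟩
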